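/- The number of maximal independent sets of the cycle C_n (n ≥ 3) satisfies the Perrin recurrence: imax(C_n) = imax(C_{n-2}) + imax(C_{n-3}) for n ≥ 6, with imax(C_3) = 3, imax(C_4) = 2, imax(C_5) = 5. -/

import Mathlib

open SimpleGraph

/-- `s` is an independent set in `G`. -/
def IsIndep {V : Type*} (G : SimpleGraph V) (s : Set V) : Prop :=
  ∀ ⦃u⦄, u ∈ s → ∀ ⦃v⦄, v ∈ s → ¬ G.Adj u v

/-- `s` is a maximal independent set in `G`. -/
def IsMaxIndep {V : Type*} (G : SimpleGraph V) (s : Set V) : Prop :=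
  IsIndep G s ∧ ∀ t : Set V, IsIndep G t → s ⊆ t → s = t

/-- The number of maximal independent sets of `G`. -/
noncomputable def imax {V : Type*} (G : SimpleGraph V) : ℕ :=
  Set.ncard {s : Set V | IsMaxIndep G s}

/-- `G` is twin-free: no two distinct vertices have the same open neighbourhood. -/
def TwinFree {V : Type*} (G : SimpleGraph V) : Prop :=
  ∀ u v : V, G.neighborSet u = G.neighborSet v → u = v

abbrev St := {p : Bool × Bool // ¬(p.1 = true ∧ p.2 = true)}

def tr (s t : St) : Prop :=
  s.1.2 = t.1.1 ∧ (s.1.1 = true ∨ s.1.2 = true ∨ t.1.2 = true)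

instance : DecidableRel tr := fun s t => by unfold tr; infer_instance

def T : Matrix St St ℕ := Matrix.of fun s t => if tr s t then 1 else 0

lemma T3 : T ^ 3 = T + 1 := by decide

/-- linear walks of length n from s to t -/
def lw (n : ℕ) (s t : St) : Finset (Fin (n+1) → St) :=
  Finset.univ.filter (fun v => v 0 = s ∧ v (Fin.last n) = t ∧
    ∀ i : Fin n, tr (v i.castSucc) (v i.succ))

lemma card_lw : ∀ (n : ℕ) (s t : St), (lw n s t).card = (T ^ n) s t := by
  intro n
  induction n with
  | zero =>
    intro s t
    rw [pow_zero, Matrix.one_apply]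
    by_cases h : s = t
    · subst h
      rw [if_pos rfl, Finset.card_eq_one]
      refine ⟨fun _ => s, ?_⟩
      ext v
      simp only [lw, Finset.mem_filter, Finset.mem_univ, true_and, Finset.mem_singleton]
      constructor
      · rintro ⟨h0, _, _⟩
        funext i
        have : i = 0 := Fin.ext (by omega)
        rw [this, h0]
      · rintro rfl; exact ⟨rfl, rfl, fun i => i.elim0⟩
    · rw [if_neg h, Finset.card_eq_zero]
      ext v
      simp only [lw, Finset.mem_filter, Finset.mem_univ, true_and, Finset.notMem_empty,
        iff_false, not_and]
      intro h0 hrest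
      exact absurd (h0.symm.trans hrest) h
  | succ n ih =>
    intro s t
    rw [pow_succ', Matrix.mul_apply]
    rw [Finset.card_eq_sum_card_fiberwise (f := fun v => v (1 : Fin (n+2)))
      (t := Finset.univ) (fun x _ => Finset.mem_univ _)]
    refine Finset.sum_congr rfl (fun u _ => ?_)
    have h01 : (Fin.succ 0 : Fin (n+2)) = 1 := rfl
    by_cases hu : tr s u
    · have hT : T s u = 1 := if_pos hu
      rw [hT, one_mul, ← ih u t]
      refine Finset.card_nbij' (fun v => v ∘ Fin.succ) (fun g => Fin.cons s g) ?_ ?_ ?_ ?_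
      · intro v hv
        change v ∈ (_ : Finset _) at hv
        simp only [Finset.mem_filter, Finset.mem_coe, lw, Finset.mem_univ, true_and] at hv ⊢
        obtain ⟨⟨h0, hl, hc⟩, h1⟩ := hv
        refine ⟨by simpa [h01] using h1, ?_, ?_⟩
        · show v (Fin.last n).succ = t
          rw [Fin.succ_last]; exact hl
        · intro i
          show tr (v i.castSucc.succ) (v i.succ.succ)
          rw [Fin.succ_castSucc]
          exact hc i.succ
      · intro g hg
        change g ∈ (_ : Finset _) at hg
        simp only [Finset.mem_filter, Finset.mem_coe, lw, Finset.mem_univ, true_and] at hg ⊢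
        obtain ⟨h0, hl, hc⟩ := hg
        refine ⟨⟨rfl, ?_, ?_⟩, ?_⟩
        · have h2 : Fin.last (n+1) = (Fin.last n).succ := rfl
          rw [h2, Fin.cons_succ]; exact hl
        · intro j
          induction j using Fin.cases with
          | zero =>
            rw [Fin.castSucc_zero, Fin.cons_zero, h01, show (1 : Fin (n+2)) = Fin.succ 0 from rfl,
              Fin.cons_succ, h0]
            exact hu
          | succ i =>
            rw [← Fin.succ_castSucc, Fin.cons_succ, Fin.cons_succ]
            exact hc i
        · rw [← h01, Fin.cons_succ, h0]
      · intro v hv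
        change v ∈ (_ : Finset _) at hv
        simp only [Finset.mem_filter, lw, Finset.mem_univ, true_and] at hv
        show Fin.cons s (v ∘ Fin.succ) = v
        have : v ∘ Fin.succ = Fin.tail v := rfl
        rw [this, ← hv.1.1, Fin.cons_self_tail]
      · intro g hg
        funext i
        simp only [Function.comp_apply, Fin.cons_succ]
    · have hT : T s u = 0 := if_neg hu
      rw [hT, zero_mul, Finset.card_eq_zero]
      ext v
      simp only [Finset.mem_filter, lw, Finset.mem_univ, true_and, Finset.notMem_empty, iff_false,
        not_and]
      rintro ⟨h0, _, hc⟩ h1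
      have := hc 0
      rw [Fin.castSucc_zero, h0, h01, h1] at this
      exact hu this

/-- cyclic walks of length m+3 -/
def cw (m : ℕ) : Finset (Fin (m+3) → St) :=
  Finset.univ.filter (fun w => ∀ i : Fin (m+3), tr (w i) (w (i+1)))

lemma succ_eq_cast {m : ℕ} (v : Fin (m+4) → St) (hv : v 0 = v (Fin.last (m+3)))
    (i : Fin (m+3)) : v i.succ = v ((i+1).castSucc) := by
  by_cases h : (i : ℕ) + 1 = m + 3
  · have h1 : i.succ = Fin.last (m+3) := Fin.ext (by simpa using h)
    have h2 : (i + 1 : Fin (m+3)) = 0 := by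
      apply Fin.ext
      simp [Fin.add_def, Nat.mod_eq_of_lt, h]
    rw [h1, h2, ← hv]
    rfl
  · have hlt : (i : ℕ) + 1 < m + 3 := lt_of_le_of_ne (Nat.succ_le_of_lt i.isLt) h
    congr 1
    apply Fin.ext
    simp [Fin.add_def, Nat.mod_eq_of_lt hlt, Nat.mod_eq_of_lt (show 1 < m + 3 by omega)]

lemma card_cw (m : ℕ) : (cw m).card = Matrix.trace (T ^ (m+3)) := by
  rw [Matrix.trace]
  rw [Finset.card_eq_sum_card_fiberwise (f := fun w => w (0 : Fin (m+3)))
    (t := Finset.univ) (fun x _ => Finset.mem_univ _)]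
  refine Finset.sum_congr rfl (fun s _ => ?_)
  rw [Matrix.diag_apply, ← card_lw (m+3) s s]
  refine Finset.card_nbij' (fun w => Fin.snoc w (w 0)) (fun v => v ∘ Fin.castSucc) ?_ ?_ ?_ ?_
  · intro w hw
    change w ∈ (_ : Finset _) at hw
    simp only [Finset.mem_filter, Finset.mem_coe, cw, lw, Finset.mem_univ, true_and] at hw ⊢
    obtain ⟨hc, h0⟩ := hw
    have hz : (Fin.snoc w (w 0) : Fin (m+4) → St) 0 = w 0 := by
      show (Fin.snoc w (w 0) : Fin (m+4) → St) ((0 : Fin (m+3)).castSucc) = w 0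
      rw [Fin.snoc_castSucc]
    have hl : (Fin.snoc w (w 0) : Fin (m+4) → St) (Fin.last (m+3)) = w 0 := Fin.snoc_last _ _
    refine ⟨by rw [hz, h0], by rw [hl, h0], ?_⟩
    intro i
    have he := succ_eq_cast (Fin.snoc w (w 0)) (by rw [hz, hl]) i
    rw [he, Fin.snoc_castSucc, Fin.snoc_castSucc]
    exact hc i
  · intro v hv
    change v ∈ (_ : Finset _) at hv
    simp only [Finset.mem_filter, Finset.mem_coe, cw, lw, Finset.mem_univ, true_and] at hv ⊢
    obtain ⟨h0, hl, hc⟩ := hv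
    constructor
    · intro i
      have := hc i
      rw [succ_eq_cast v (by rw [h0, hl]) i] at this
      exact this
    · show v ((0 : Fin (m+3)).castSucc) = s
      have : (0 : Fin (m+3)).castSucc = (0 : Fin (m+4)) := rfl
      rw [this, h0]
  · intro w _
    funext i
    simp only [Function.comp_apply, Fin.snoc_castSucc]
  · intro v hv
    change v ∈ (_ : Finset _) at hv
    simp only [Finset.mem_filter, lw, Finset.mem_univ, true_and] at hv
    obtain ⟨h0, hl, _⟩ := hv
    show Fin.snoc (v ∘ Fin.castSucc) ((v ∘ Fin.castSucc) 0) = v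
    funext j
    induction j using Fin.lastCases with
    | last =>
      rw [Fin.snoc_last]
      show v ((0 : Fin (m+3)).castSucc) = v (Fin.last (m+3))
      have : (0 : Fin (m+3)).castSucc = (0 : Fin (m+4)) := rfl
      rw [this, h0, hl]
    | cast i =>
      rw [Fin.snoc_castSucc]
      rfl

/-- valid cyclic words: indicator vectors of maximal independent sets -/
def wd (m : ℕ) : Finset (Fin (m+3) → Bool) :=
  Finset.univ.filter (fun x => ∀ i : Fin (m+3),
    ¬(x i = true ∧ x (i+1) = true) ∧ (x i = true ∨ x (i+1) = true ∨ x (i+1+1) = true))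

lemma card_wd (m : ℕ) : (wd m).card = (cw m).card := by
  refine Finset.card_bij'
    (fun x hx => fun k => (⟨(x k, x (k+1)), ((Finset.mem_filter.mp hx).2 k).1⟩ : St))
    (fun w _ => fun k => (w k).1.1) ?_ ?_ ?_ ?_
  · intro x hx
    simp only [cw, Finset.mem_filter, Finset.mem_univ, true_and]
    intro k
    exact ⟨rfl, ((Finset.mem_filter.mp hx).2 k).2⟩
  · intro w hw
    have hw' := (Finset.mem_filter.mp hw).2
    simp only [wd, Finset.mem_filter, Finset.mem_univ, true_and]
    intro k
    have he : (w k).1.2 = (w (k+1)).1.1 := (hw' k).1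
    have he2 : (w (k+1)).1.2 = (w (k+1+1)).1.1 := (hw' (k+1)).1
    constructor
    · rw [← he]
      exact (w k).2
    · have ho := (hw' k).2
      rwa [he, he2] at ho
  · intro x _
    rfl
  · intro w hw
    have hw' := (Finset.mem_filter.mp hw).2
    funext k
    apply Subtype.ext
    apply Prod.ext
    · rfl
    · exact ((hw' k).1).symm

lemma isMaxIndep_iff_dom {V : Type*} (G : SimpleGraph V) (s : Set V) :
    IsMaxIndep G s ↔ IsIndep G s ∧ ∀ v, v ∉ s → ∃ u ∈ s, G.Adj u v := by
  constructor
  · rintro ⟨hi, hmax⟩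
    refine ⟨hi, fun v hv => ?_⟩
    by_contra hno
    push_neg at hno
    have hind : IsIndep G (insert v s) := by
      rintro u1 hu1 u2 hu2 hadj
      rcases hu1 with rfl | hu1
      · rcases hu2 with rfl | hu2
        · exact G.irrefl hadj
        · exact hno u2 hu2 hadj.symm
      · rcases hu2 with rfl | hu2
        · exact hno u1 hu1 hadj
        · exact hi hu1 hu2 hadj
    have := hmax (insert v s) hind (Set.subset_insert _ _)
    exact hv (this ▸ Set.mem_insert v s)
  · rintro ⟨hi, hdom⟩
    refine ⟨hi, fun t ht hsub => ?_⟩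
    refine Set.Subset.antisymm hsub (fun x hx => ?_)
    by_contra hxs
    obtain ⟨u, hu, hadj⟩ := hdom x hxs
    exact ht (hsub hu) hx hadj

lemma cycle_adj_iff {m : ℕ} (u v : Fin (m+3)) :
    (cycleGraph (m+3)).Adj u v ↔ u = v + 1 ∨ v = u + 1 := by
  have : (cycleGraph (m+3)).Adj u v ↔ u - v = 1 ∨ v - u = 1 := cycleGraph_adj (n := m+1)
  rw [this, sub_eq_iff_eq_add, sub_eq_iff_eq_add, add_comm (1 : Fin (m+3)) v,
    add_comm (1 : Fin (m+3)) u]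

lemma maxIndep_iff_word {m : ℕ} (s : Set (Fin (m+3))) :
    IsMaxIndep (cycleGraph (m+3)) s ↔ ∀ i : Fin (m+3),
      ¬(i ∈ s ∧ i + 1 ∈ s) ∧ (i ∈ s ∨ i + 1 ∈ s ∨ i + 1 + 1 ∈ s) := by
  rw [isMaxIndep_iff_dom]
  constructor
  · rintro ⟨hi, hdom⟩ i
    constructor
    · rintro ⟨h1, h2⟩
      exact hi h1 h2 ((cycle_adj_iff i (i+1)).2 (Or.inr rfl))
    · by_cases h1 : i ∈ s
      · exact Or.inl h1
      by_cases h2 : i + 1 ∈ s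
      · exact Or.inr (Or.inl h2)
      obtain ⟨u, hu, hadj⟩ := hdom (i+1) h2
      rcases (cycle_adj_iff u (i+1)).1 hadj with h | h
      · exact Or.inr (Or.inr (h ▸ hu))
      · have : u = i := by
          have := congrArg (fun z => z - 1) h
          simpa using this.symm
        exact absurd (this ▸ hu) h1
  · intro hw
    constructor
    · intro u hu v hv hadj
      rcases (cycle_adj_iff u v).1 hadj with h | h
      · exact (hw v).1 ⟨hv, h ▸ hu⟩
      · exact (hw u).1 ⟨hu, h ▸ hv⟩
    · intro v hv
      have := (hw (v - 1)).2
      have e1 : v - 1 + 1 = v := sub_add_cancel v 1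
      rw [e1] at this
      rcases this with h | h | h
      · exact ⟨v - 1, h, (cycle_adj_iff (v-1) v).2 (Or.inr (sub_add_cancel v 1).symm)⟩
      · exact absurd h hv
      · exact ⟨v + 1, h, (cycle_adj_iff (v+1) v).2 (Or.inl rfl)⟩

lemma imax_eq_card_wd (m : ℕ) : imax (cycleGraph (m+3)) = (wd m).card := by
  classical
  have h1 : imax (cycleGraph (m+3)) =
      Nat.card {s : Set (Fin (m+3)) // IsMaxIndep (cycleGraph (m+3)) s} := by
    rw [imax, ← Nat.card_coe_set_eq]
    rfl
  rw [h1]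
  have e : {s : Set (Fin (m+3)) // IsMaxIndep (cycleGraph (m+3)) s} ≃
      {x : Fin (m+3) → Bool // x ∈ wd m} :=
    { toFun := fun sp => ⟨fun i => decide (i ∈ sp.1), by
        have hs := (maxIndep_iff_word sp.1).1 sp.2
        simp only [wd, Finset.mem_filter, Finset.mem_univ, true_and, decide_eq_true_eq]
        exact hs⟩
      invFun := fun xp => ⟨{i | xp.1 i = true}, by
        have hx := xp.2
        simp only [wd, Finset.mem_filter, Finset.mem_univ, true_and] at hx
        rw [maxIndep_iff_word]
        simpa only [Set.mem_setOf_eq] using hx⟩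
      left_inv := fun sp => by
        apply Subtype.ext
        ext i
        simp only [Set.mem_setOf_eq, decide_eq_true_eq]
      right_inv := fun xp => by
        apply Subtype.ext
        funext i
        simp only [Set.mem_setOf_eq, Bool.decide_eq_true] }
  rw [Nat.card_congr e, Nat.card_eq_fintype_card, Fintype.card_coe]

lemma imax_trace (m : ℕ) : imax (cycleGraph (m+3)) = Matrix.trace (T ^ (m+3)) := by
  rw [imax_eq_card_wd, card_wd, card_cw]

theorem stmt_19 :
    imax (SimpleGraph.cycleGraph 3) = 3 ∧
    imax (SimpleGraph.cycleGraph 4) = 2 ∧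
    imax (SimpleGraph.cycleGraph 5) = 5 ∧
    ∀ n : ℕ, 6 ≤ n →
      imax (SimpleGraph.cycleGraph n) =
        imax (SimpleGraph.cycleGraph (n - 2)) + imax (SimpleGraph.cycleGraph (n - 3)) := by
  refine ⟨(imax_trace 0).trans (by decide), (imax_trace 1).trans (by decide),
    (imax_trace 2).trans (by decide), ?_⟩
  intro n hn
  obtain ⟨k, rfl⟩ : ∃ k, n = k + 6 := ⟨n - 6, by omega⟩
  have e2 : k + 6 - 2 = (k+1) + 3 := by omega
  have e3 : k + 6 - 3 = k + 3 := by omega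
  have e6 : k + 6 = (k+3) + 3 := by omega
  rw [e2, e3, e6, imax_trace (k+3), imax_trace (k+1), imax_trace k]
  have hT : T ^ (k + 3 + 3) = T ^ (k + 1 + 3) + T ^ (k + 3) := by
    calc T ^ (k + 3 + 3) = T ^ (k + 3) * T ^ 3 := by rw [← pow_add]
      _ = T ^ (k + 3) * T + T ^ (k + 3) := by rw [T3, mul_add, mul_one]
      _ = T ^ (k + 1 + 3) + T ^ (k + 3) := by
          congr 1
  rw [hT, Matrix.trace_add]
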